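/- Let w = (1, 1, 1, 0) and consider the 4-dimensional Lorentz space ℓ⁴_{w,2} with norm ‖x‖_{w,2} = (Σᵢ wᵢ (xᵢ*)²)^{1/2}, where (xᵢ*) is the nonincreasing rearrangement of (|xᵢ|). Let P₂ : ℝ³ → ℝ³ be the Euclidean orthogonal projection onto ker(e₁* + e₂* + e₃*) ⊂ ℓ₂³, and define P(x₁, x₂, x₃, x₄) = (P₂(x₁, x₂, x₃), 0). Then ‖Px‖_{w,2} ≤ ‖x‖_{w,2} for all x ∈ ℝ⁴; in particular ker(e₁* + e₂* + e₃*) (inside ℝ⁴) is the range of a norm-one projection on ℓ⁴_{w,2}. -/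

import Mathlib

/-- The (squared) Lorentz norm `Σ wᵢ (xᵢ*)²` on `ℝⁿ`, expressed as the
maximum over permutations (valid for nonincreasing nonnegative weights). -/
noncomputable def lNormSq {n : ℕ} (w x : Fin n → ℝ) : ℝ :=
  Finset.univ.sup' Finset.univ_nonempty
    (fun σ : Equiv.Perm (Fin n) => ∑ i, w i * (x (σ i)) ^ 2)

/-- `P(x₁,x₂,x₃,x₄) = (P₂(x₁,x₂,x₃), 0)` where `P₂` is the Euclidean orthogonal
projection of `ℝ³` onto `ker(e₁* + e₂* + e₃*)`. -/
noncomputable def projLor : (Fin 4 → ℝ) → (Fin 4 → ℝ) :=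
  fun x i => if (i : ℕ) < 3 then x i - (x 0 + x 1 + x 2) / 3 else 0

/-- With `w = (1,1,1,0)`, the projection `projLor` is a contraction on
`ℓ⁴_{w,2}`; hence `ker(e₁*+e₂*+e₃*)` is 1-complemented in `ℓ⁴_{w,2}`. -/
theorem stmt4 (x : Fin 4 → ℝ) :
    Real.sqrt (lNormSq ![1, 1, 1, 0] (projLor x)) ≤
      Real.sqrt (lNormSq ![1, 1, 1, 0] x) := by
  apply Real.sqrt_le_sqrt
  set y := projLor x with hy
  have hy3 : y 3 = 0 := by simp only [hy, projLor]; exact if_neg (by decide)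
  have h1 : lNormSq ![1, 1, 1, 0] y ≤ y 0 ^ 2 + y 1 ^ 2 + y 2 ^ 2 := by
    apply Finset.sup'_le
    intro σ _
    have hle : ∀ i : Fin 4, (![1, 1, 1, 0] : Fin 4 → ℝ) i * (y (σ i)) ^ 2 ≤ (y (σ i)) ^ 2 := by
      intro i
      have hw : (![1, 1, 1, 0] : Fin 4 → ℝ) i ≤ 1 := by fin_cases i <;> norm_num
      nlinarith [sq_nonneg (y (σ i))]
    calc ∑ i, (![1, 1, 1, 0] : Fin 4 → ℝ) i * (y (σ i)) ^ 2
        ≤ ∑ i, (y (σ i)) ^ 2 := Finset.sum_le_sum fun i _ => hle i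
      _ = ∑ i, (y i) ^ 2 := Equiv.sum_comp σ (fun i => (y i) ^ 2)
      _ = y 0 ^ 2 + y 1 ^ 2 + y 2 ^ 2 := by
          rw [Fin.sum_univ_four, hy3]; ring
  have h2 : y 0 ^ 2 + y 1 ^ 2 + y 2 ^ 2 ≤ x 0 ^ 2 + x 1 ^ 2 + x 2 ^ 2 := by
    have h0 : y 0 = x 0 - (x 0 + x 1 + x 2) / 3 := by simp [hy, projLor]
    have h1' : y 1 = x 1 - (x 0 + x 1 + x 2) / 3 := by simp [hy, projLor]
    have h2' : y 2 = x 2 - (x 0 + x 1 + x 2) / 3 := by simp [hy, projLor]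
    rw [h0, h1', h2']
    nlinarith [sq_nonneg (x 0 + x 1 + x 2)]
  have h3 : x 0 ^ 2 + x 1 ^ 2 + x 2 ^ 2 ≤ lNormSq ![1, 1, 1, 0] x := by
    have := Finset.le_sup' (f := fun σ : Equiv.Perm (Fin 4) =>
      ∑ i, (![1, 1, 1, 0] : Fin 4 → ℝ) i * (x (σ i)) ^ 2)
      (Finset.mem_univ (1 : Equiv.Perm (Fin 4)))
    exact le_trans (by simp [Fin.sum_univ_four]) this
  linarith
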